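/- The 5-dimensional algebra A₁₃₃(λ) over ℂ with nonzero products e₁e₁ = e₃ + λe₅, e₁e₂ = e₃, e₂e₁ = e₄, e₂e₂ = e₅ is 2-step nilpotent, its square equals span(e₃, e₄, e₅) (dimension 3), and its annihilator equals its square. -/
import Mathlib


open Module

/-- Structure constants of the algebra `A₁₃₃(λ)` (basis `e₁,…,e₅`, 0-indexed):
`e₁e₁ = e₃ + λe₅, e₁e₂ = e₃, e₂e₁ = e₄, e₂e₂ = e₅`, all other products zero. -/
noncomputable def cA (lam : ℂ) : Fin 5 → Fin 5 → Fin 5 → ℂ := fun i j m =>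
  if i = 0 ∧ j = 0 ∧ m = 2 then 1
  else if i = 0 ∧ j = 0 ∧ m = 4 then lam
  else if i = 0 ∧ j = 1 ∧ m = 2 then 1
  else if i = 1 ∧ j = 0 ∧ m = 3 then 1
  else if i = 1 ∧ j = 1 ∧ m = 4 then 1
  else 0

/-- The multiplication of `A₁₃₃(λ)` on `ℂ⁵`. -/
noncomputable def mul133 (lam : ℂ) (x y : Fin 5 → ℂ) : Fin 5 → ℂ :=
  fun m => ∑ i, ∑ j, x i * y j * cA lam i j m

/-- The square of `A₁₃₃(λ)`: the span of all products. -/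
noncomputable def square133 (lam : ℂ) : Submodule ℂ (Fin 5 → ℂ) :=
  Submodule.span ℂ {z : Fin 5 → ℂ | ∃ x y : Fin 5 → ℂ, mul133 lam x y = z}

lemma mul133_eq (lam : ℂ) (x y : Fin 5 → ℂ) (m : Fin 5) :
    mul133 lam x y m =
      if m = 2 then x 0 * y 0 + x 0 * y 1
      else if m = 3 then x 1 * y 0
      else if m = 4 then lam * (x 0 * y 0) + x 1 * y 1
      else 0 := by
  fin_cases m <;> simp [mul133, cA, Fin.sum_univ_five] <;> ring

lemma mul133_zero_of (lam : ℂ) {a : Fin 5 → ℂ} (h0 : a 0 = 0) (h1 : a 1 = 0)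
    (x : Fin 5 → ℂ) : mul133 lam a x = 0 ∧ mul133 lam x a = 0 := by
  constructor <;> funext m <;> rw [mul133_eq] <;> simp [h0, h1]

lemma mem_span_triple_iff (x : Fin 5 → ℂ) :
    x ∈ Submodule.span ℂ
      {(Pi.single 2 1 : Fin 5 → ℂ), (Pi.single 3 1 : Fin 5 → ℂ),
        (Pi.single 4 1 : Fin 5 → ℂ)} ↔ x 0 = 0 ∧ x 1 = 0 := by
  constructor
  · intro hx
    have hK : Submodule.span ℂ
        {(Pi.single 2 1 : Fin 5 → ℂ), (Pi.single 3 1 : Fin 5 → ℂ),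
          (Pi.single 4 1 : Fin 5 → ℂ)} ≤
        (LinearMap.ker (LinearMap.proj 0 : (Fin 5 → ℂ) →ₗ[ℂ] ℂ)) ⊓
        (LinearMap.ker (LinearMap.proj 1 : (Fin 5 → ℂ) →ₗ[ℂ] ℂ)) := by
      rw [Submodule.span_le]
      intro z hz
      simp only [Set.mem_insert_iff, Set.mem_singleton_iff] at hz
      rcases hz with h | h | h <;> subst h <;>
        simp [Submodule.mem_inf, LinearMap.mem_ker, Pi.single_eq_of_ne]
    have := hK hx
    simpa [Submodule.mem_inf, LinearMap.mem_ker] using this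
  · rintro ⟨h0, h1⟩
    have hx : x = x 2 • (Pi.single 2 1 : Fin 5 → ℂ) + x 3 • (Pi.single 3 1 : Fin 5 → ℂ) +
        x 4 • (Pi.single 4 1 : Fin 5 → ℂ) := by
      funext m
      fin_cases m <;> simp [h0, h1, Pi.single_apply]
    rw [hx]
    refine Submodule.add_mem _ (Submodule.add_mem _ ?_ ?_) ?_ <;>
      exact Submodule.smul_mem _ _ (Submodule.subset_span (by simp))

lemma square_eq (lam : ℂ) :
    square133 lam = Submodule.span ℂ
      {(Pi.single 2 1 : Fin 5 → ℂ), (Pi.single 3 1 : Fin 5 → ℂ),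
        (Pi.single 4 1 : Fin 5 → ℂ)} := by
  apply le_antisymm
  · rw [square133, Submodule.span_le]
    rintro z ⟨x, y, rfl⟩
    rw [SetLike.mem_coe, mem_span_triple_iff]
    constructor <;> rw [mul133_eq] <;> simp
  · rw [Submodule.span_le]
    intro z hz
    simp only [Set.mem_insert_iff, Set.mem_singleton_iff] at hz
    rw [SetLike.mem_coe, square133]
    apply Submodule.subset_span
    rcases hz with h | h | h <;> subst h
    · exact ⟨Pi.single 0 1, Pi.single 1 1, by
        funext m; rw [mul133_eq]; fin_cases m <;> simp [Pi.single_apply]⟩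
    · exact ⟨Pi.single 1 1, Pi.single 0 1, by
        funext m; rw [mul133_eq]; fin_cases m <;> simp [Pi.single_apply]⟩
    · exact ⟨Pi.single 1 1, Pi.single 1 1, by
        funext m; rw [mul133_eq]; fin_cases m <;> simp [Pi.single_apply]⟩

lemma indep_triple : LinearIndependent ℂ
    ![(Pi.single 2 1 : Fin 5 → ℂ), (Pi.single 3 1 : Fin 5 → ℂ),
      (Pi.single 4 1 : Fin 5 → ℂ)] := by
  rw [Fintype.linearIndependent_iff]
  intro g hg i
  have h2 := congrFun hg 2
  have h3 := congrFun hg 3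
  have h4 := congrFun hg 4
  simp [Fin.sum_univ_three, Pi.single_apply, Matrix.cons_val_zero,
    Matrix.cons_val_one, Matrix.head_cons, Matrix.cons_val_two, Matrix.tail_cons, Matrix.vecHead, Matrix.vecTail] at h2 h3 h4
  fin_cases i <;> assumption

/-- `A₁₃₃(λ)` is 2-step nilpotent, its square equals
`span(e₃, e₄, e₅)` and has dimension `3`, and its annihilator equals its square. -/
theorem A133_two_step_square_ann (lam : ℂ) :
    (∀ x y z : Fin 5 → ℂ,
        mul133 lam (mul133 lam x y) z = 0 ∧ mul133 lam x (mul133 lam y z) = 0) ∧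
    square133 lam = Submodule.span ℂ
      {(Pi.single 2 1 : Fin 5 → ℂ), (Pi.single 3 1 : Fin 5 → ℂ),
        (Pi.single 4 1 : Fin 5 → ℂ)} ∧
    finrank ℂ (square133 lam) = 3 ∧
    {a : Fin 5 → ℂ | ∀ x : Fin 5 → ℂ, mul133 lam a x = 0 ∧ mul133 lam x a = 0}
      = (square133 lam : Set (Fin 5 → ℂ)) := by
  have hprod0 : ∀ x y : Fin 5 → ℂ, mul133 lam x y 0 = 0 ∧ mul133 lam x y 1 = 0 := by
    intro x y; constructor <;> rw [mul133_eq] <;> simp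
  refine ⟨?_, square_eq lam, ?_, ?_⟩
  · intro x y z
    exact ⟨(mul133_zero_of lam (hprod0 x y).1 (hprod0 x y).2 z).1,
      (mul133_zero_of lam (hprod0 y z).1 (hprod0 y z).2 x).2⟩
  · rw [square_eq lam]
    have hr : ({(Pi.single 2 1 : Fin 5 → ℂ), (Pi.single 3 1 : Fin 5 → ℂ),
        (Pi.single 4 1 : Fin 5 → ℂ)} : Set (Fin 5 → ℂ)) =
        Set.range ![(Pi.single 2 1 : Fin 5 → ℂ), Pi.single 3 1, Pi.single 4 1] := by
      ext w
      simp [Fin.exists_fin_succ, or_comm, or_assoc, eq_comm]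
      tauto
    rw [hr, finrank_span_eq_card indep_triple]
    simp
  · ext a
    simp only [Set.mem_setOf_eq, SetLike.mem_coe, square_eq lam, mem_span_triple_iff]
    constructor
    · intro h
      have h1 := (h (Pi.single 0 1)).1
      have h2 := congrFun h1 2
      have h3 := congrFun h1 3
      rw [mul133_eq] at h2 h3
      simp [Pi.single_apply] at h2 h3
      exact ⟨h2, h3⟩
    · rintro ⟨h0, h1⟩ x
      exact mul133_zero_of lam h0 h1 x
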